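/- Let C₀ ≥ 1, 0 < b ≤ 1, C̃ > C₀² and C₂ > 0. Set r_N = ((2/b)·C̃^{N−1})⁴ for integers N ≥ 1, and define α₁ = exp(C₂·√(r₁)) and α_N = exp(C₂·√(r_N))·exp(−2·r_{N−1}·b·C₀^{−2(N−2)}) for N ≥ 2. Then the sequence (C̃^{N(N−1)}·α₁·α₂⋯α_N)_{N ≥ 1} is bounded: there exists L > 0 such that C̃^{N(N−1)}·∏_{k=1}^{N} α_k ≤ L for every integer N ≥ 1. -/

import Mathlib

private lemma cost_aux_ineq (A B E Ct δ n X Y : ℝ)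
    (hA : 0 < A) (hB : 0 < B) (hE : 0 < E) (hCt2 : 1 ≤ Ct^2) (hδ : 0 < δ)
    (hn : 3 ≤ n) (hX : 1 ≤ X) (hY : 0 < Y)
    (h1 : 2*(2*A+B)*Ct^2 ≤ E*δ^2*(n-1))
    (hQ : ((n-1)*δ)^2 ≤ X/Y) :
    2*n*A + B*(X*Ct^2) ≤ E * X * (X/Y) := by
  have hX0 : (0:ℝ) < X := lt_of_lt_of_le one_pos hX
  have c1 : 1 ≤ Ct^2*X := by nlinarith
  have c2 : 2*n*A ≤ 2*A*(n+1)*(Ct^2*X) := by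
    have h2A : (0:ℝ) ≤ 2*A*(n+1) := by nlinarith
    have := mul_le_mul_of_nonneg_left c1 h2A
    nlinarith
  have c3 : B*(X*Ct^2) ≤ B*(n+1)*(Ct^2*X) := by
    have : (0:ℝ) ≤ B*(Ct^2*X)*n :=
      mul_nonneg (mul_nonneg hB.le (by positivity)) (by linarith)
    nlinarith
  have step1 : 2*n*A + B*(X*Ct^2) ≤ (2*A+B)*(n+1)*(Ct^2*X) := by nlinarith
  have d1 : (2*A+B)*(n+1)*Ct^2 ≤ E*δ^2*(n-1)^2 := by
    have e0 : (0:ℝ) ≤ (2*A+B)*Ct^2 := by positivity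
    have e1 := mul_le_mul_of_nonneg_left (show n+1 ≤ 2*(n-1) by linarith) e0
    have e2 := mul_le_mul_of_nonneg_left h1 (show (0:ℝ) ≤ n-1 by linarith)
    nlinarith
  have step2 : (2*A+B)*(n+1)*(Ct^2*X) ≤ E*δ^2*(n-1)^2*X := by
    have := mul_le_mul_of_nonneg_right d1 hX0.le
    nlinarith
  have step3 : E*δ^2*(n-1)^2*X ≤ E*X*(X/Y) := by
    have := mul_le_mul_of_nonneg_left hQ (show (0:ℝ) ≤ E*X by positivity)
    nlinarith
  linarith

set_option maxHeartbeats 1000000 in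
/-- Boundedness of the sequence C̃^{N(N-1)}·α₁·α₂⋯α_N appearing in (2.19)-(2.20). -/
theorem cost_sequence_bounded
    (C₀ b Ct C₂ : ℝ) (hC₀ : 1 ≤ C₀) (hb0 : 0 < b) (hb1 : b ≤ 1)
    (hCt : C₀ ^ 2 < Ct) (hC₂ : 0 < C₂)
    (r : ℕ → ℝ) (hr : ∀ N : ℕ, 1 ≤ N → r N = ((2 / b) * Ct ^ (N - 1)) ^ 4)
    (α : ℕ → ℝ)
    (hα1 : α 1 = Real.exp (C₂ * Real.sqrt (r 1)))
    (hα : ∀ N : ℕ, 2 ≤ N → α N =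
      Real.exp (C₂ * Real.sqrt (r N)) *
        Real.exp (-(2 * r (N - 1) * b * C₀ ^ (-(2 * ((N : ℤ) - 2)))))) :
    ∃ L : ℝ, 0 < L ∧ ∀ N : ℕ, 1 ≤ N →
      Ct ^ (N * (N - 1)) * ∏ k ∈ Finset.Icc 1 N, α k ≤ L := by
  have hC₀0 : (0:ℝ) < C₀ := lt_of_lt_of_le one_pos hC₀
  have hCt1 : (1:ℝ) < Ct := by nlinarith
  have hCt0 : (0:ℝ) < Ct := by linarith
  have hA : 0 < Real.log Ct := Real.log_pos hCt1
  have hB : 0 < C₂ * (2/b)^2 := by positivity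
  have hE : 0 < 32 / b^3 := by positivity
  have hρ : 1 < Ct / C₀ := by rw [lt_div_iff₀ hC₀0]; nlinarith
  obtain ⟨K, hK⟩ := exists_nat_ge
    (2*(2*Real.log Ct + C₂ * (2/b)^2)*Ct^2 / ((32/b^3) * (Ct/C₀ - 1)^2))
  set N₀ := K + 3 with hN₀def
  have hN₀1 : 1 ≤ N₀ := by omega
  have hαpos : ∀ k : ℕ, 1 ≤ k → 0 < α k := by
    intro k hk
    rcases eq_or_lt_of_le hk with h | h
    · rw [← h, hα1]; exact Real.exp_pos _
    · rw [hα k h]; positivity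
  set a : ℕ → ℝ := fun N => Ct ^ (N * (N - 1)) * ∏ k ∈ Finset.Icc 1 N, α k with hadef
  have hapos : ∀ N : ℕ, 0 < a N := by
    intro N
    apply mul_pos (pow_pos hCt0 _)
    exact Finset.prod_pos (fun k hk => hαpos k (Finset.mem_Icc.mp hk).1)
  have hrec : ∀ N : ℕ, 1 ≤ N → a (N+1) = a N * (Ct ^ (2*N) * α (N+1)) := by
    intro N hN
    simp only [hadef]
    rw [Finset.prod_Icc_succ_top (by omega : 1 ≤ N + 1)]
    have hexp : (N+1) * ((N+1) - 1) = N * (N-1) + 2*N := by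
      rcases N with _ | M
      · omega
      · simp [Nat.succ_sub_one]; ring
    rw [hexp, pow_add]; ring
  -- key ratio bound
  have hstep : ∀ N : ℕ, N₀ ≤ N → Ct ^ (2*N) * α (N+1) ≤ 1 := by
    intro N hN
    have hN3 : 3 ≤ N := by omega
    have hN1 : 1 ≤ N := by omega
    have hn3 : (3:ℝ) ≤ (N:ℝ) := by exact_mod_cast hN3
    set X : ℝ := Ct ^ (2*(N-1)) with hXdef
    set Y : ℝ := C₀ ^ (2*(N-1)) with hYdef
    have hXpos : 0 < X := pow_pos hCt0 _
    have hYpos : 0 < Y := pow_pos hC₀0 _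
    have hX1 : 1 ≤ X := one_le_pow₀ hCt1.le
    have hs : Real.sqrt (r (N+1)) = (2/b)^2 * Ct^(2*N) := by
      rw [hr (N+1) (by omega), Nat.add_sub_cancel]
      rw [show ((2/b) * Ct^N)^4 = ((2/b)^2 * Ct^(2*N))^2 by rw [pow_mul]; ring]
      exact Real.sqrt_sq (by positivity)
    have hz : (C₀ : ℝ) ^ (-(2 * (((N+1 : ℕ) : ℤ) - 2))) = Y⁻¹ := by
      have h1 : -(2 * (((N+1 : ℕ):ℤ) - 2)) = -((2*(N-1) : ℕ) : ℤ) := by push_cast; omega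
      rw [h1, zpow_neg, zpow_natCast, hYdef]
    have hXsq : X = (Ct^(N-1))^2 := by
      rw [hXdef, show 2*(N-1) = (N-1)*2 from by omega, pow_mul]
    have hrN : r N = (2/b)^4 * X^2 := by
      rw [hr N hN1, mul_pow, hXsq]; ring
    have hα' : α (N+1) = Real.exp (C₂ * ((2/b)^2 * Ct^(2*N))) *
        Real.exp (-(2 * ((2/b)^4 * X^2) * b * Y⁻¹)) := by
      rw [hα (N+1) (by omega), hs, Nat.add_sub_cancel, hrN, hz]
    have hCtpow : Ct ^ (2*N) = Real.exp (((2*N : ℕ) : ℝ) * Real.log Ct) := by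
      rw [← Real.log_pow, Real.exp_log (pow_pos hCt0 _)]
    calc Ct ^ (2*N) * α (N+1)
        = Real.exp (((2*N : ℕ) : ℝ) * Real.log Ct) *
          (Real.exp (C₂ * ((2/b)^2 * Ct^(2*N))) *
           Real.exp (-(2 * ((2/b)^4 * X^2) * b * Y⁻¹))) := by rw [hα', hCtpow]
      _ = Real.exp (((2*N : ℕ) : ℝ) * Real.log Ct + (C₂ * ((2/b)^2 * Ct^(2*N)) +
            -(2 * ((2/b)^4 * X^2) * b * Y⁻¹))) := by
            rw [← Real.exp_add, ← Real.exp_add]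
      _ ≤ 1 := by
          rw [Real.exp_le_one_iff]
          have ecast : ((2*N : ℕ) : ℝ) = 2*(N:ℝ) := by push_cast; ring
          have e2N : Ct^(2*N) = X * Ct^2 := by
            rw [show 2*N = 2*(N-1)+2 from by omega, pow_add, ← hXdef]
          rw [ecast, e2N]
          have hKn : (K:ℝ) + 3 ≤ (N:ℝ) := by
            have h' : ((K + 3 : ℕ) : ℝ) ≤ (N : ℝ) := by exact_mod_cast hN
            push_cast at h'; linarith
          have hδ : 0 < Ct/C₀ - 1 := by linarith
          have h1 : 2*(2*Real.log Ct + C₂*(2/b)^2)*Ct^2 ≤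
              (32/b^3)*(Ct/C₀-1)^2*((N:ℝ)-1) := by
            rw [div_le_iff₀ (by positivity)] at hK
            have e1 := mul_le_mul_of_nonneg_right
              (show (K:ℝ) ≤ (N:ℝ)-1 by linarith)
              (show (0:ℝ) ≤ (32/b^3)*(Ct/C₀-1)^2 by positivity)
            nlinarith
          have hQ : (((N:ℝ)-1)*(Ct/C₀-1))^2 ≤ X / Y := by
            have hber : 1 + ((N-1 : ℕ):ℝ) * (Ct/C₀-1) ≤ (1 + (Ct/C₀-1)) ^ (N-1) :=
              one_add_mul_le_pow (by linarith : (-2:ℝ) ≤ Ct/C₀-1) (N-1)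
            have hcast : ((N-1 : ℕ):ℝ) = (N:ℝ) - 1 := by
              rw [Nat.cast_sub hN1]; push_cast; ring
            have h1δ : 1 + (Ct/C₀-1) = Ct/C₀ := by ring
            rw [hcast, h1δ] at hber
            have hnn : (0:ℝ) ≤ ((N:ℝ)-1)*(Ct/C₀-1) :=
              mul_nonneg (by linarith) hδ.le
            have hle : ((N:ℝ)-1)*(Ct/C₀-1) ≤ (Ct/C₀) ^ (N-1) := by linarith
            calc (((N:ℝ)-1)*(Ct/C₀-1))^2 ≤ ((Ct/C₀) ^ (N-1))^2 :=
                  pow_le_pow_left₀ hnn hle 2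
              _ = (Ct/C₀) ^ (2*(N-1)) := by
                    rw [show 2*(N-1) = (N-1)*2 from by omega, pow_mul]
              _ = X / Y := by rw [div_pow, ← hXdef, ← hYdef]
          have hmain := cost_aux_ineq (Real.log Ct) (C₂*(2/b)^2) (32/b^3) Ct
            (Ct/C₀-1) (N:ℝ) X Y hA hB hE (by nlinarith) hδ hn3 hX1 hYpos h1 hQ
          have hB' : C₂*((2/b)^2*(X*Ct^2)) = (C₂*(2/b)^2)*(X*Ct^2) := by ring
          have hE' : (32/b^3) * X * (X/Y) = 2*((2/b)^4*X^2)*b*Y⁻¹ := by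
            field_simp; ring
          rw [hB']
          linarith [hmain]
  -- boundedness via max over initial segment
  have hne : (Finset.Icc 1 N₀).Nonempty := Finset.nonempty_Icc.mpr hN₀1
  set L := (Finset.Icc 1 N₀).sup' hne a with hLdef
  have hL1 : a 1 ≤ L := Finset.le_sup' a (Finset.mem_Icc.mpr ⟨le_refl 1, hN₀1⟩)
  have hL0 : 0 < L := lt_of_lt_of_le (hapos 1) hL1
  have hbound : ∀ N : ℕ, N₀ ≤ N → a N ≤ L := by
    intro N hN
    induction N, hN using Nat.le_induction with
    | base => exact Finset.le_sup' a (Finset.mem_Icc.mpr ⟨hN₀1, le_refl N₀⟩)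
    | succ N hN ih =>
      rw [hrec N (le_trans hN₀1 hN)]
      calc a N * (Ct ^ (2*N) * α (N+1)) ≤ a N * 1 :=
            mul_le_mul_of_nonneg_left (hstep N hN) (hapos N).le
        _ = a N := mul_one _
        _ ≤ L := ih
  refine ⟨L, hL0, ?_⟩
  intro N hN
  show a N ≤ L
  by_cases h : N ≤ N₀
  · exact Finset.le_sup' a (Finset.mem_Icc.mpr ⟨hN, h⟩)
  · exact hbound N (le_of_lt (not_le.mp h))
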